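/- Let X be a set with at least two elements and L ⊆ P(X) a family of subsets containing X, closed under finite unions, forming a T₁ subbase for a compact topology on X. Then: (a) L, as a join-semilattice under union with top X, is conjunctive; and (b) the map x ↦ m_x := {a ∈ L : x ∉ a} is a homeomorphism of X with Spec_Max L. -/

import Mathlib

/-- `I` is an ideal of the join-semilattice `L ⊆ 𝒫 X` (join = union). -/
def IsIdealIn {X : Type*} (L I : Set (Set X)) : Prop :=
  I ⊆ L ∧ (∀ a ∈ I, ∀ b ∈ L, b ⊆ a → b ∈ I) ∧ (∀ a ∈ I, ∀ b ∈ I, a ∪ b ∈ I)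

/-- A maximal ideal of `L`: an ideal not containing the top `univ` such that
every strictly larger ideal contains `univ`. -/
def IsMaxIdealIn {X : Type*} (L I : Set (Set X)) : Prop :=
  IsIdealIn L I ∧ Set.univ ∉ I ∧ ∀ J, IsIdealIn L J → I ⊂ J → Set.univ ∈ J

/-- The cozero-subbase topology on the set of maximal ideals of `L`. -/
def specMaxTopIn {X : Type*} (L : Set (Set X)) :
    TopologicalSpace {m : Set (Set X) // IsMaxIdealIn L m} :=
  TopologicalSpace.generateFrom
    {S | ∃ a ∈ L, S = {m : {m : Set (Set X) // IsMaxIdealIn L m} | a ∉ m.1}}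

/-- Auxiliary: a family closed under binary unions absorbs finite bi-unions
adjoined to a base element. -/
lemma aux_mem_union_biUnion {α : Type*} {ι : Type*} (M : Set (Set α))
    (hM : ∀ a ∈ M, ∀ b ∈ M, a ∪ b ∈ M) {a₀ : Set α} (ha₀ : a₀ ∈ M)
    (t : Finset ι) (f : ι → Set α) (hf : ∀ i ∈ t, f i ∈ M) :
    a₀ ∪ ⋃ i ∈ t, f i ∈ M := by
  classical
  induction t using Finset.induction_on with
  | empty => simpa using ha₀
  | insert _ _ hni ih =>
    rename_i c s
    rw [Finset.set_biUnion_insert]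
    have h1 : a₀ ∪ ⋃ i ∈ s, f i ∈ M := ih (fun i hi => hf i (Finset.mem_insert_of_mem hi))
    have h2 : f c ∈ M := hf c (Finset.mem_insert_self c s)
    have h3 : (a₀ ∪ ⋃ i ∈ s, f i) ∪ f c ∈ M := hM _ h1 _ h2
    rw [Set.union_comm (f c), ← Set.union_assoc]
    exact h3

theorem t1_subbase_representation {X : Type*} [Nontrivial X] (L : Set (Set X))
    (htop : Set.univ ∈ L) (hunion : ∀ a ∈ L, ∀ b ∈ L, a ∪ b ∈ L)
    (ht1 : ∀ x y : X, x ≠ y → ∃ a ∈ L, x ∈ a ∧ y ∉ a)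
    (hcpt : @CompactSpace X (TopologicalSpace.generateFrom L)) :
    (∀ a ∈ L, ∀ b ∈ L, ¬ b ⊆ a →
      ∃ w ∈ L, a ⊆ w ∧ w ≠ Set.univ ∧ w ∪ b = Set.univ) ∧
    (∃ f : X → {m : Set (Set X) // IsMaxIdealIn L m},
      (∀ x : X, (f x).1 = {a ∈ L | x ∉ a}) ∧
      @IsHomeomorph X _ (TopologicalSpace.generateFrom L) (specMaxTopIn L) f) := by
  classical
  letI : TopologicalSpace X := TopologicalSpace.generateFrom L
  letI : TopologicalSpace {m : Set (Set X) // IsMaxIdealIn L m} := specMaxTopIn L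
  have hopen : ∀ a ∈ L, IsOpen a := fun a ha => TopologicalSpace.GenerateOpen.basic a ha
  -- the key compactness lemma
  have key : ∀ (x : X) (b : Set X), b ∈ L → x ∈ b →
      ∃ w ∈ L, x ∉ w ∧ b ∪ w = Set.univ := by
    intro x b hb hxb
    obtain ⟨y, hy⟩ := exists_ne x
    obtain ⟨a₀, ha₀L, _, hxa₀⟩ := ht1 y x hy
    have hK : IsCompact bᶜ := (hopen b hb).isClosed_compl.isCompact
    have hcover : bᶜ ⊆ ⋃ c : {c : Set X // c ∈ L ∧ x ∉ c}, c.1 := by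
      intro z hz
      have hzx : z ≠ x := fun h => hz (by simpa [h] using hxb)
      obtain ⟨a, haL, hza, hxa⟩ := ht1 z x hzx
      exact Set.mem_iUnion.mpr ⟨⟨a, haL, hxa⟩, hza⟩
    obtain ⟨t, ht⟩ := hK.elim_finite_subcover
      (fun c : {c : Set X // c ∈ L ∧ x ∉ c} => c.1) (fun c => hopen c.1 c.2.1) hcover
    set M : Set (Set X) := {a | a ∈ L ∧ x ∉ a} with hM
    have hMun : ∀ a ∈ M, ∀ b ∈ M, a ∪ b ∈ M := by
      rintro a ⟨haL, hxa⟩ b ⟨hbL, hxb'⟩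
      exact ⟨hunion a haL b hbL, by simp [hxa, hxb']⟩
    have hmem : a₀ ∪ ⋃ c ∈ t, (c : {c : Set X // c ∈ L ∧ x ∉ c}).1 ∈ M :=
      aux_mem_union_biUnion M hMun ⟨ha₀L, hxa₀⟩ t _ (fun c _ => c.2)
    refine ⟨a₀ ∪ ⋃ c ∈ t, (c : {c : Set X // c ∈ L ∧ x ∉ c}).1, hmem.1, hmem.2, ?_⟩
    apply Set.eq_univ_of_forall
    intro z
    by_cases hzb : z ∈ b
    · exact Or.inl hzb
    · have : z ∈ ⋃ c ∈ t, (c : {c : Set X // c ∈ L ∧ x ∉ c}).1 := ht hzb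
      exact Or.inr (Or.inr this)
  -- m_x is a maximal ideal
  have hmx : ∀ x : X, IsMaxIdealIn L {a ∈ L | x ∉ a} := by
    intro x
    refine ⟨⟨fun a ha => ha.1, ?_, ?_⟩, ?_, ?_⟩
    · rintro a ⟨haL, hxa⟩ b hbL hba
      exact ⟨hbL, fun hxb => hxa (hba hxb)⟩
    · rintro a ⟨haL, hxa⟩ b ⟨hbL, hxb⟩
      exact ⟨hunion a haL b hbL, by simp [hxa, hxb]⟩
    · rintro ⟨_, h⟩; exact h (Set.mem_univ x)
    · rintro J hJ hsub
      obtain ⟨b, hbJ, hbn⟩ := Set.exists_of_ssubset hsub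
      have hbL : b ∈ L := hJ.1 hbJ
      have hxb : x ∈ b := by
        by_contra hxb
        exact hbn ⟨hbL, hxb⟩
      obtain ⟨w, hwL, hxw, hbw⟩ := key x b hbL hxb
      have hwJ : w ∈ J := hsub.1 ⟨hwL, hxw⟩
      have := hJ.2.2 b hbJ w hwJ
      rwa [hbw] at this
  -- every maximal ideal is m_x
  have hsurj : ∀ m : Set (Set X), IsMaxIdealIn L m → ∃ x : X, m = {a ∈ L | x ∉ a} := by
    intro m hm
    have hx : ∃ x : X, ∀ a ∈ m, x ∉ a := by
      by_contra hc
      push_neg at hc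
      have hempty : (Set.univ : Set X) ∩ ⋂ a : {a : Set X // a ∈ m}, (a.1)ᶜ = ∅ := by
        ext z
        simp only [Set.mem_inter_iff, Set.mem_iInter, Set.mem_compl_iff, Set.mem_empty_iff_false,
          Set.mem_univ, true_and, iff_false, not_forall, not_not]
        obtain ⟨a, ham, hza⟩ := hc z
        exact ⟨⟨a, ham⟩, hza⟩
      obtain ⟨t, ht⟩ := IsCompact.elim_finite_subfamily_closed isCompact_univ
        (fun a : {a : Set X // a ∈ m} => (a.1)ᶜ)
        (fun a => (hopen a.1 (hm.1.1 a.2)).isClosed_compl) hempty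
      have huniv : (⋃ a ∈ t, (a : {a : Set X // a ∈ m}).1) = Set.univ := by
        ext z
        simp only [Set.mem_iUnion, Set.mem_univ, iff_true]
        by_contra hz
        push_neg at hz
        have : z ∈ (Set.univ : Set X) ∩ ⋂ a ∈ t, ((a : {a : Set X // a ∈ m}).1)ᶜ := by
          simp only [Set.mem_inter_iff, Set.mem_univ, true_and, Set.mem_iInter,
            Set.mem_compl_iff]
          exact fun a ha => hz a ha
        rw [ht] at this
        exact this
      obtain ⟨a₀, ha₀t⟩ : t.Nonempty := by
        rcases Finset.eq_empty_or_nonempty t with h | h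
        · exfalso
          obtain ⟨z⟩ := (inferInstance : Nonempty X)
          have : z ∈ (⋃ a ∈ t, (a : {a : Set X // a ∈ m}).1) := huniv ▸ Set.mem_univ z
          simp [h] at this
        · exact h
      have hmem : a₀.1 ∪ ⋃ a ∈ t, (a : {a : Set X // a ∈ m}).1 ∈ m :=
        aux_mem_union_biUnion m hm.1.2.2 a₀.2 t _ (fun a _ => a.2)
      rw [huniv, Set.union_univ] at hmem
      exact hm.2.1 hmem
    obtain ⟨x, hx⟩ := hx
    have hsubset : m ⊆ {a ∈ L | x ∉ a} := fun a ham => ⟨hm.1.1 ham, hx a ham⟩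
    rcases eq_or_lt_of_le hsubset with h | h
    · exact ⟨x, h⟩
    · exfalso
      exact (hmx x).2.1 (hm.2.2 _ (hmx x).1 h)
  -- conjunctivity
  constructor
  · intro a haL b hbL hnsub
    obtain ⟨x, hxb, hxa⟩ := Set.not_subset.mp hnsub
    obtain ⟨w, hwL, hxw, hbw⟩ := key x b hbL hxb
    refine ⟨a ∪ w, hunion a haL w hwL, Set.subset_union_left, ?_, ?_⟩
    · intro h
      have : x ∈ a ∪ w := h ▸ Set.mem_univ x
      rcases this with h' | h'
      exacts [hxa h', hxw h']
    · apply Set.eq_univ_of_forall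
      intro z
      have : z ∈ b ∪ w := hbw ▸ Set.mem_univ z
      rcases this with h' | h'
      exacts [Or.inr h', Or.inl (Or.inr h')]
  -- homeomorphism
  · set f : X → {m : Set (Set X) // IsMaxIdealIn L m} := fun x => ⟨{a ∈ L | x ∉ a}, hmx x⟩
      with hf
    have hfval : ∀ x : X, (f x).1 = {a ∈ L | x ∉ a} := fun x => rfl
    have hinj : Function.Injective f := by
      intro x y hxy
      by_contra hne
      obtain ⟨a, haL, hxa, hya⟩ := ht1 x y hne
      have : a ∈ (f y).1 := ⟨haL, hya⟩
      rw [← hxy] at this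
      exact this.2 hxa
    have hsurj' : Function.Surjective f := by
      rintro ⟨m, hm⟩
      obtain ⟨x, hx⟩ := hsurj m hm
      exact ⟨x, Subtype.ext hx.symm⟩
    have hbij : Function.Bijective f := ⟨hinj, hsurj'⟩
    have hnot : ∀ (x : X), ∀ a ∈ L, (a ∉ (f x).1 ↔ x ∈ a) := by
      intro x a ha
      rw [hfval, Set.mem_sep_iff]
      constructor
      · intro h; by_contra hxa; exact h ⟨ha, hxa⟩
      · intro hxa h; exact h.2 hxa
    have hpre : ∀ a ∈ L, f ⁻¹' {m : {m : Set (Set X) // IsMaxIdealIn L m} | a ∉ m.1} = a := by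
      intro a haL
      ext x
      simp only [Set.mem_preimage, Set.mem_setOf_eq]
      exact hnot x a haL
    have hcontf : Continuous f := by
      apply continuous_generateFrom_iff.mpr
      rintro S ⟨a, haL, rfl⟩
      rw [hpre a haL]
      exact hopen a haL
    set e : X ≃ {m : Set (Set X) // IsMaxIdealIn L m} := Equiv.ofBijective f hbij with he
    have hconte : Continuous e.symm := by
      apply continuous_generateFrom_iff.mpr
      intro a haL
      have hnot' : ∀ (x : X), ∀ b ∈ L, (b ∉ (e x).1 ↔ x ∈ b) := fun x b hb => hnot x b hb
      have : e.symm ⁻¹' a = {m : {m : Set (Set X) // IsMaxIdealIn L m} | a ∉ m.1} := by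
        ext m
        simp only [Set.mem_preimage, Set.mem_setOf_eq]
        constructor
        · intro hx
          have h2 := (hnot' (e.symm m) a haL).mpr hx
          rwa [e.apply_symm_apply] at h2
        · intro h2
          apply (hnot' (e.symm m) a haL).mp
          rwa [e.apply_symm_apply]
      rw [this]
      exact TopologicalSpace.GenerateOpen.basic _ ⟨a, haL, rfl⟩
    refine ⟨f, hfval, ?_⟩
    have hcoe : ⇑(Homeomorph.mk e hcontf hconte) = f := by funext x; rfl
    exact hcoe ▸ (Homeomorph.mk e hcontf hconte).isHomeomorph
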